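/- Define a : {(x,y) ∈ ℝ² : x > 0, y > 0} → ℝ³ by a(x,y) = (x(x³+2y³), y(x³+2y³), x²(x³+4y³)) / (x³+y³). Then the unit normal n(x,y) := (∂_x a × ∂_y a)/|∂_x a × ∂_y a| converges to (0,0,1) as (x,y) → (0,0) within the open first quadrant. -/

import Mathlib

open Filter Topology

noncomputable def blendSurf : ℝ × ℝ → Fin 3 → ℝ := fun v =>
  ![v.1 * (v.1 ^ 3 + 2 * v.2 ^ 3) / (v.1 ^ 3 + v.2 ^ 3),
    v.2 * (v.1 ^ 3 + 2 * v.2 ^ 3) / (v.1 ^ 3 + v.2 ^ 3),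
    v.1 ^ 2 * (v.1 ^ 3 + 4 * v.2 ^ 3) / (v.1 ^ 3 + v.2 ^ 3)]

noncomputable def blendNormal : ℝ × ℝ → Fin 3 → ℝ := fun v =>
  let c := crossProduct (fderiv ℝ blendSurf v (1, 0)) (fderiv ℝ blendSurf v (0, 1))
  (Real.sqrt (∑ i, c i ^ 2))⁻¹ • c

namespace Stmt11Aux

noncomputable def g0 : ℝ × ℝ → ℝ := fun v => v.1 * (v.1 ^ 3 + 2 * v.2 ^ 3) / (v.1 ^ 3 + v.2 ^ 3)
noncomputable def g1 : ℝ × ℝ → ℝ := fun v => v.2 * (v.1 ^ 3 + 2 * v.2 ^ 3) / (v.1 ^ 3 + v.2 ^ 3)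
noncomputable def g2 : ℝ × ℝ → ℝ := fun v => v.1 ^ 2 * (v.1 ^ 3 + 4 * v.2 ^ 3) / (v.1 ^ 3 + v.2 ^ 3)

lemma blendSurf_eq : blendSurf = fun v i => ![g0, g1, g2] i v := by
  funext v i
  fin_cases i <;> rfl

lemma diff_g0 {v : ℝ × ℝ} (h : v.1 ^ 3 + v.2 ^ 3 ≠ 0) : DifferentiableAt ℝ g0 v := by
  have h1 : DifferentiableAt ℝ
      (fun v : ℝ × ℝ => v.1 * (v.1 ^ 3 + 2 * v.2 ^ 3) * (v.1 ^ 3 + v.2 ^ 3)⁻¹) v :=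
    (differentiableAt_fst.mul ((differentiableAt_fst.pow 3).add
      ((differentiableAt_snd.pow 3).const_mul 2))).mul
      (((differentiableAt_fst.pow 3).add (differentiableAt_snd.pow 3)).inv h)
  unfold g0
  simpa [g0, div_eq_mul_inv] using h1

lemma diff_g1 {v : ℝ × ℝ} (h : v.1 ^ 3 + v.2 ^ 3 ≠ 0) : DifferentiableAt ℝ g1 v := by
  have h1 : DifferentiableAt ℝ
      (fun v : ℝ × ℝ => v.2 * (v.1 ^ 3 + 2 * v.2 ^ 3) * (v.1 ^ 3 + v.2 ^ 3)⁻¹) v :=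
    (differentiableAt_snd.mul ((differentiableAt_fst.pow 3).add
      ((differentiableAt_snd.pow 3).const_mul 2))).mul
      (((differentiableAt_fst.pow 3).add (differentiableAt_snd.pow 3)).inv h)
  unfold g1
  simpa [g1, div_eq_mul_inv] using h1

lemma diff_g2 {v : ℝ × ℝ} (h : v.1 ^ 3 + v.2 ^ 3 ≠ 0) : DifferentiableAt ℝ g2 v := by
  have h1 : DifferentiableAt ℝ
      (fun v : ℝ × ℝ => v.1 ^ 2 * (v.1 ^ 3 + 4 * v.2 ^ 3) * (v.1 ^ 3 + v.2 ^ 3)⁻¹) v :=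
    ((differentiableAt_fst.pow 2).mul ((differentiableAt_fst.pow 3).add
      ((differentiableAt_snd.pow 3).const_mul 4))).mul
      (((differentiableAt_fst.pow 3).add (differentiableAt_snd.pow 3)).inv h)
  unfold g2
  simpa [g2, div_eq_mul_inv] using h1

lemma line_x (f : ℝ × ℝ → ℝ) (v : ℝ × ℝ) (hf : DifferentiableAt ℝ f v) :
    HasDerivAt (fun t => f (t, v.2)) (fderiv ℝ f v (1, 0)) v.1 := by
  have h1 : HasDerivAt (fun t : ℝ => ((t, v.2) : ℝ × ℝ)) ((1 : ℝ), (0 : ℝ)) v.1 :=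
    (hasDerivAt_id v.1).prodMk (hasDerivAt_const v.1 v.2)
  have h2 : HasFDerivAt f (fderiv ℝ f v) ((v.1, v.2) : ℝ × ℝ) := by
    simpa using hf.hasFDerivAt
  simpa [Function.comp_def] using h2.comp_hasDerivAt_of_eq v.1 h1 rfl

lemma line_y (f : ℝ × ℝ → ℝ) (v : ℝ × ℝ) (hf : DifferentiableAt ℝ f v) :
    HasDerivAt (fun t => f (v.1, t)) (fderiv ℝ f v (0, 1)) v.2 := by
  have h1 : HasDerivAt (fun t : ℝ => ((v.1, t) : ℝ × ℝ)) ((0 : ℝ), (1 : ℝ)) v.2 :=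
    (hasDerivAt_const v.2 v.1).prodMk (hasDerivAt_id v.2)
  have h2 : HasFDerivAt f (fderiv ℝ f v) ((v.1, v.2) : ℝ × ℝ) := by
    simpa using hf.hasFDerivAt
  simpa [Function.comp_def] using h2.comp_hasDerivAt_of_eq v.2 h1 rfl

lemma fderiv_g0_x {v : ℝ × ℝ} (hne : v.1 ^ 3 + v.2 ^ 3 ≠ 0) :
    fderiv ℝ g0 v (1, 0) = (v.1 ^ 6 + 2 * v.2 ^ 6) / (v.1 ^ 3 + v.2 ^ 3) ^ 2 := by
  have hl := line_x g0 v (diff_g0 hne)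
  have hnum := (hasDerivAt_id v.1).mul ((hasDerivAt_pow 3 v.1).add_const (2 * v.2 ^ 3))
  have hden := (hasDerivAt_pow 3 v.1).add_const (v.2 ^ 3)
  have hdiv := hnum.div hden hne
  rw [hl.unique hdiv]
  simp only [Pi.mul_apply, id]
  field_simp
  ring

lemma fderiv_g1_x {v : ℝ × ℝ} (hne : v.1 ^ 3 + v.2 ^ 3 ≠ 0) :
    fderiv ℝ g1 v (1, 0) = -(3 * v.1 ^ 2 * v.2 ^ 4) / (v.1 ^ 3 + v.2 ^ 3) ^ 2 := by
  have hl := line_x g1 v (diff_g1 hne)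
  have hnum := HasDerivAt.const_mul v.2 ((hasDerivAt_pow 3 v.1).add_const (2 * v.2 ^ 3))
  have hden := (hasDerivAt_pow 3 v.1).add_const (v.2 ^ 3)
  have hdiv := hnum.div hden hne
  rw [hl.unique hdiv]
  field_simp
  ring

lemma fderiv_g2_x {v : ℝ × ℝ} (hne : v.1 ^ 3 + v.2 ^ 3 ≠ 0) :
    fderiv ℝ g2 v (1, 0) =
      (2 * v.1 ^ 7 + v.1 ^ 4 * v.2 ^ 3 + 8 * v.1 * v.2 ^ 6) / (v.1 ^ 3 + v.2 ^ 3) ^ 2 := by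
  have hl := line_x g2 v (diff_g2 hne)
  have hnum := (hasDerivAt_pow 2 v.1).mul ((hasDerivAt_pow 3 v.1).add_const (4 * v.2 ^ 3))
  have hden := (hasDerivAt_pow 3 v.1).add_const (v.2 ^ 3)
  have hdiv := hnum.div hden hne
  rw [hl.unique hdiv]
  simp only [Pi.mul_apply, id]
  field_simp
  ring

lemma fderiv_g0_y {v : ℝ × ℝ} (hne : v.1 ^ 3 + v.2 ^ 3 ≠ 0) :
    fderiv ℝ g0 v (0, 1) = 3 * v.1 ^ 4 * v.2 ^ 2 / (v.1 ^ 3 + v.2 ^ 3) ^ 2 := by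
  have hl := line_y g0 v (diff_g0 hne)
  have hnum := HasDerivAt.const_mul v.1
    (HasDerivAt.const_add (v.1 ^ 3) (HasDerivAt.const_mul 2 (hasDerivAt_pow 3 v.2)))
  have hden := HasDerivAt.const_add (v.1 ^ 3) (hasDerivAt_pow 3 v.2)
  have hdiv := hnum.div hden hne
  rw [hl.unique hdiv]
  field_simp
  ring

lemma fderiv_g1_y {v : ℝ × ℝ} (hne : v.1 ^ 3 + v.2 ^ 3 ≠ 0) :
    fderiv ℝ g1 v (0, 1) =
      (v.1 ^ 6 + 6 * v.1 ^ 3 * v.2 ^ 3 + 2 * v.2 ^ 6) / (v.1 ^ 3 + v.2 ^ 3) ^ 2 := by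
  have hl := line_y g1 v (diff_g1 hne)
  have hnum := (hasDerivAt_id v.2).mul
    (HasDerivAt.const_add (v.1 ^ 3) (HasDerivAt.const_mul 2 (hasDerivAt_pow 3 v.2)))
  have hden := HasDerivAt.const_add (v.1 ^ 3) (hasDerivAt_pow 3 v.2)
  have hdiv := hnum.div hden hne
  rw [hl.unique hdiv]
  simp only [Pi.mul_apply, id]
  field_simp
  ring

lemma fderiv_g2_y {v : ℝ × ℝ} (hne : v.1 ^ 3 + v.2 ^ 3 ≠ 0) :
    fderiv ℝ g2 v (0, 1) = 9 * v.1 ^ 5 * v.2 ^ 2 / (v.1 ^ 3 + v.2 ^ 3) ^ 2 := by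
  have hl := line_y g2 v (diff_g2 hne)
  have hnum := HasDerivAt.const_mul (v.1 ^ 2)
    (HasDerivAt.const_add (v.1 ^ 3) (HasDerivAt.const_mul 4 (hasDerivAt_pow 3 v.2)))
  have hden := HasDerivAt.const_add (v.1 ^ 3) (hasDerivAt_pow 3 v.2)
  have hdiv := hnum.div hden hne
  rw [hl.unique hdiv]
  field_simp
  ring

lemma diff_all {v : ℝ × ℝ} (hne : v.1 ^ 3 + v.2 ^ 3 ≠ 0) (i : Fin 3) :
    DifferentiableAt ℝ (![g0, g1, g2] i) v := by
  fin_cases i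
  · exact diff_g0 hne
  · exact diff_g1 hne
  · exact diff_g2 hne

lemma fderiv_blend_apply {v : ℝ × ℝ} (hne : v.1 ^ 3 + v.2 ^ 3 ≠ 0) (w : ℝ × ℝ) (i : Fin 3) :
    fderiv ℝ blendSurf v w i = fderiv ℝ (![g0, g1, g2] i) v w := by
  rw [blendSurf_eq, fderiv_pi (diff_all hne)]
  simp

lemma fderiv_blend_x {v : ℝ × ℝ} (hne : v.1 ^ 3 + v.2 ^ 3 ≠ 0) :
    fderiv ℝ blendSurf v (1, 0) =
      ![(v.1 ^ 6 + 2 * v.2 ^ 6) / (v.1 ^ 3 + v.2 ^ 3) ^ 2,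
        -(3 * v.1 ^ 2 * v.2 ^ 4) / (v.1 ^ 3 + v.2 ^ 3) ^ 2,
        (2 * v.1 ^ 7 + v.1 ^ 4 * v.2 ^ 3 + 8 * v.1 * v.2 ^ 6) / (v.1 ^ 3 + v.2 ^ 3) ^ 2] := by
  funext i
  rw [fderiv_blend_apply hne]
  fin_cases i
  · simpa using fderiv_g0_x hne
  · simpa using fderiv_g1_x hne
  · simpa using fderiv_g2_x hne

lemma fderiv_blend_y {v : ℝ × ℝ} (hne : v.1 ^ 3 + v.2 ^ 3 ≠ 0) :
    fderiv ℝ blendSurf v (0, 1) =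
      ![3 * v.1 ^ 4 * v.2 ^ 2 / (v.1 ^ 3 + v.2 ^ 3) ^ 2,
        (v.1 ^ 6 + 6 * v.1 ^ 3 * v.2 ^ 3 + 2 * v.2 ^ 6) / (v.1 ^ 3 + v.2 ^ 3) ^ 2,
        9 * v.1 ^ 5 * v.2 ^ 2 / (v.1 ^ 3 + v.2 ^ 3) ^ 2] := by
  funext i
  rw [fderiv_blend_apply hne]
  fin_cases i
  · simpa using fderiv_g0_y hne
  · simpa using fderiv_g1_y hne
  · simpa using fderiv_g2_y hne

lemma cross_eq {v : ℝ × ℝ} (hne : v.1 ^ 3 + v.2 ^ 3 ≠ 0) :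
    crossProduct (fderiv ℝ blendSurf v (1, 0)) (fderiv ℝ blendSurf v (0, 1)) =
      ![-(2 * v.1 ^ 13 + 13 * v.1 ^ 10 * v.2 ^ 3 + 45 * v.1 ^ 7 * v.2 ^ 6 +
            50 * v.1 ^ 4 * v.2 ^ 9 + 16 * v.1 * v.2 ^ 12) / (v.1 ^ 3 + v.2 ^ 3) ^ 4,
        (6 * v.1 ^ 5 * v.2 ^ 8 + 3 * v.1 ^ 8 * v.2 ^ 5 - 3 * v.1 ^ 11 * v.2 ^ 2) /
          (v.1 ^ 3 + v.2 ^ 3) ^ 4,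
        (v.1 ^ 12 + 6 * v.1 ^ 9 * v.2 ^ 3 + 13 * v.1 ^ 6 * v.2 ^ 6 + 12 * v.1 ^ 3 * v.2 ^ 9 +
            4 * v.2 ^ 12) / (v.1 ^ 3 + v.2 ^ 3) ^ 4] := by
  rw [fderiv_blend_x hne, fderiv_blend_y hne, cross_apply]
  funext i
  fin_cases i <;>
    (simp only [Fin.mk_zero, Fin.mk_one, Fin.isValue, Matrix.cons_val_zero, Matrix.cons_val_one,
      Matrix.head_cons, Matrix.cons_val_two, Matrix.tail_cons, Matrix.cons_val_fin_one]
     field_simp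
     ring)

lemma smul_div_helper {Q s p : ℝ} (hs : s ≠ 0) : (Q / s)⁻¹ * (p / s) = Q⁻¹ * p := by
  rcases eq_or_ne Q 0 with h | h
  · simp [h]
  · field_simp

lemma normal_eq {v : ℝ × ℝ} (hx : 0 < v.1) (hy : 0 < v.2) :
    blendNormal v =
      (Real.sqrt ((-(2 * v.1 ^ 13 + 13 * v.1 ^ 10 * v.2 ^ 3 + 45 * v.1 ^ 7 * v.2 ^ 6 +
            50 * v.1 ^ 4 * v.2 ^ 9 + 16 * v.1 * v.2 ^ 12)) ^ 2 +
          (6 * v.1 ^ 5 * v.2 ^ 8 + 3 * v.1 ^ 8 * v.2 ^ 5 - 3 * v.1 ^ 11 * v.2 ^ 2) ^ 2 +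
          (v.1 ^ 12 + 6 * v.1 ^ 9 * v.2 ^ 3 + 13 * v.1 ^ 6 * v.2 ^ 6 + 12 * v.1 ^ 3 * v.2 ^ 9 +
            4 * v.2 ^ 12) ^ 2))⁻¹ •
        ![-(2 * v.1 ^ 13 + 13 * v.1 ^ 10 * v.2 ^ 3 + 45 * v.1 ^ 7 * v.2 ^ 6 +
            50 * v.1 ^ 4 * v.2 ^ 9 + 16 * v.1 * v.2 ^ 12),
          6 * v.1 ^ 5 * v.2 ^ 8 + 3 * v.1 ^ 8 * v.2 ^ 5 - 3 * v.1 ^ 11 * v.2 ^ 2,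
          v.1 ^ 12 + 6 * v.1 ^ 9 * v.2 ^ 3 + 13 * v.1 ^ 6 * v.2 ^ 6 + 12 * v.1 ^ 3 * v.2 ^ 9 +
            4 * v.2 ^ 12] := by
  have hne : v.1 ^ 3 + v.2 ^ 3 ≠ 0 := by positivity
  have hs : (0 : ℝ) < (v.1 ^ 3 + v.2 ^ 3) ^ 4 := by positivity
  set P0 : ℝ := -(2 * v.1 ^ 13 + 13 * v.1 ^ 10 * v.2 ^ 3 + 45 * v.1 ^ 7 * v.2 ^ 6 +
      50 * v.1 ^ 4 * v.2 ^ 9 + 16 * v.1 * v.2 ^ 12) with hP0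
  set P1 : ℝ := 6 * v.1 ^ 5 * v.2 ^ 8 + 3 * v.1 ^ 8 * v.2 ^ 5 - 3 * v.1 ^ 11 * v.2 ^ 2 with hP1
  set P2 : ℝ := v.1 ^ 12 + 6 * v.1 ^ 9 * v.2 ^ 3 + 13 * v.1 ^ 6 * v.2 ^ 6 +
      12 * v.1 ^ 3 * v.2 ^ 9 + 4 * v.2 ^ 12 with hP2
  have hP2pos : 0 < P2 := by rw [hP2]; positivity
  have hQpos : 0 < P0 ^ 2 + P1 ^ 2 + P2 ^ 2 := by
    have h1 : 0 < P2 ^ 2 := by positivity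
    nlinarith [sq_nonneg P0, sq_nonneg P1]
  have hsqQ : 0 < Real.sqrt (P0 ^ 2 + P1 ^ 2 + P2 ^ 2) := Real.sqrt_pos.2 hQpos
  have hc := cross_eq hne
  simp only [blendNormal]
  rw [hc]
  have hsum : ∑ i, (![P0 / (v.1 ^ 3 + v.2 ^ 3) ^ 4, P1 / (v.1 ^ 3 + v.2 ^ 3) ^ 4,
      P2 / (v.1 ^ 3 + v.2 ^ 3) ^ 4] : Fin 3 → ℝ) i ^ 2 =
      (P0 ^ 2 + P1 ^ 2 + P2 ^ 2) / ((v.1 ^ 3 + v.2 ^ 3) ^ 4) ^ 2 := by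
    rw [Fin.sum_univ_three]
    simp only [Matrix.cons_val_zero, Matrix.cons_val_one, Matrix.head_cons,
      Matrix.cons_val_two, Matrix.tail_cons]
    field_simp
  rw [hsum, Real.sqrt_div (by positivity) _, Real.sqrt_sq hs.le]
  funext i
  fin_cases i <;>
    (simp only [Fin.mk_zero, Fin.mk_one, Fin.isValue, Pi.smul_apply, smul_eq_mul,
      Matrix.cons_val_zero, Matrix.cons_val_one, Matrix.head_cons, Matrix.cons_val_two,
      Matrix.tail_cons]
     exact smul_div_helper (by positivity))

lemma mono_le {x y : ℝ} (hx : 0 ≤ x) (hy : 0 ≤ y) (a b n : ℕ) (hab : a + b = n) :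
    x ^ a * y ^ b ≤ (x + y) ^ n := by
  calc x ^ a * y ^ b ≤ (x + y) ^ a * (x + y) ^ b :=
        mul_le_mul (pow_le_pow_left₀ hx (le_add_of_nonneg_right hy) a)
          (pow_le_pow_left₀ hy (le_add_of_nonneg_left hx) b) (by positivity) (by positivity)
    _ = (x + y) ^ n := by rw [← pow_add, hab]

lemma bound0 {x y : ℝ} (hx : 0 < x) (hy : 0 < y) :
    2*x^13+13*x^10*y^3+45*x^7*y^6+50*x^4*y^9+16*x*y^12 ≤ 126*(x+y)^13 := by
  have m1 : x^13*y^0 ≤ (x+y)^13 := mono_le hx.le hy.le 13 0 13 rfl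
  have m2 : x^10*y^3 ≤ (x+y)^13 := mono_le hx.le hy.le 10 3 13 rfl
  have m3 : x^7*y^6 ≤ (x+y)^13 := mono_le hx.le hy.le 7 6 13 rfl
  have m4 : x^4*y^9 ≤ (x+y)^13 := mono_le hx.le hy.le 4 9 13 rfl
  have m5 : x^1*y^12 ≤ (x+y)^13 := mono_le hx.le hy.le 1 12 13 rfl
  simp only [pow_zero, mul_one, pow_one] at m1 m5
  linarith

lemma bound1 {x y : ℝ} (hx : 0 < x) (hy : 0 < y) :
    |6*x^5*y^8+3*x^8*y^5-3*x^11*y^2| ≤ 12*(x+y)^13 := by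
  have m1 : x^5*y^8 ≤ (x+y)^13 := mono_le hx.le hy.le 5 8 13 rfl
  have m2 : x^8*y^5 ≤ (x+y)^13 := mono_le hx.le hy.le 8 5 13 rfl
  have m3 : x^11*y^2 ≤ (x+y)^13 := mono_le hx.le hy.le 11 2 13 rfl
  have p1 : (0:ℝ) ≤ x^5*y^8 := by positivity
  have p2 : (0:ℝ) ≤ x^8*y^5 := by positivity
  have p3 : (0:ℝ) ≤ x^11*y^2 := by positivity
  rw [abs_le]
  constructor <;> nlinarith

lemma bound2 {x y : ℝ} (hx : 0 < x) (hy : 0 < y) :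
    (x+y)^12 ≤ 256*(x^12+6*x^9*y^3+13*x^6*y^6+12*x^3*y^9+4*y^12) := by
  have hA : (x+y)^3 ≤ 4*(x^3+y^3) := by nlinarith [sq_nonneg (x-y), mul_pos hx hy, add_pos hx hy]
  have h1 : (x+y)^12 ≤ (4*(x^3+y^3))^4 := by
    calc (x+y)^12 = ((x+y)^3)^4 := by ring
    _ ≤ (4*(x^3+y^3))^4 := pow_le_pow_left₀ (by positivity) hA 4
  have hid : x^12+6*x^9*y^3+13*x^6*y^6+12*x^3*y^9+4*y^12
      = (x^3+y^3)^4 + (x^3+y^3)^2*(y^3*(2*x^3+3*y^3)) := by ring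
  have hpos : (0:ℝ) ≤ (x^3+y^3)^2*(y^3*(2*x^3+3*y^3)) := by positivity
  nlinarith

lemma le_sqrt_self {P Q : ℝ} (hP : 0 ≤ P) (hPQ : P^2 ≤ Q) : P ≤ Real.sqrt Q :=
  calc P = Real.sqrt (P^2) := (Real.sqrt_sq hP).symm
  _ ≤ Real.sqrt Q := Real.sqrt_le_sqrt hPQ

lemma abstract0 {C N P Q r : ℝ} (hC : 0 < C) (hN : 0 ≤ N) (hNr : N ≤ C*r^13)
    (hrP : r^12 ≤ 256*P) (hP : 0 < P) (hr : 0 < r) (hPQ : P^2 ≤ Q) :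
    (Real.sqrt Q)⁻¹ * N ≤ (256*C)*r := by
  have hsP : P ≤ Real.sqrt Q := le_sqrt_self hP.le hPQ
  have h4 : 0 < Real.sqrt Q := lt_of_lt_of_le hP hsP
  rw [inv_mul_eq_div, div_le_iff₀ h4]
  have h5 : r^12 ≤ 256*Real.sqrt Q := le_trans hrP (by nlinarith)
  nlinarith [mul_le_mul_of_nonneg_left h5 (mul_pos hC hr).le]

lemma assembleQ {N0 P1 P2 r : ℝ} (h0 : 0 ≤ N0) (b0 : N0 ≤ 126*r^13) (b1 : |P1| ≤ 12*r^13)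
    (b2 : r^12 ≤ 256*P2) (hr : 0 ≤ r) :
    (-N0)^2 + P1^2 + P2^2 ≤ P2^2*(1+1049886720*r^2) := by
  have s0 : N0^2 ≤ (126*r^13)^2 := pow_le_pow_left₀ h0 b0 2
  have s1 : P1^2 ≤ (12*r^13)^2 := sq_le_sq' (abs_le.1 b1).1 (abs_le.1 b1).2
  have s2 : (r^12)^2 ≤ (256*P2)^2 := pow_le_pow_left₀ (by positivity) b2 2
  have hr2 : (0:ℝ) ≤ r^2 := sq_nonneg r
  nlinarith [mul_le_mul_of_nonneg_right s2 hr2]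

lemma abstract_lower {P Q r : ℝ} (hP : 0 < P)
    (hQ : Q ≤ P^2*(1+1049886720*r^2)) (hPQ : P^2 ≤ Q) :
    (Real.sqrt (1+1049886720*r^2))⁻¹ ≤ (Real.sqrt Q)⁻¹ * P := by
  set s1 := Real.sqrt (1+1049886720*r^2) with hs1def
  have hr2 : (0:ℝ) < 1+1049886720*r^2 := by positivity
  have hs1 : 0 < s1 := Real.sqrt_pos.2 hr2
  have hsQ : 0 < Real.sqrt Q := Real.sqrt_pos.2 (lt_of_lt_of_le (by positivity) hPQ)
  have hub : Real.sqrt Q ≤ P * s1 := by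
    have h := Real.sqrt_le_sqrt hQ
    rwa [Real.sqrt_mul (sq_nonneg P), Real.sqrt_sq hP.le] at h
  rw [inv_mul_eq_div, le_div_iff₀ hsQ]
  calc s1⁻¹ * Real.sqrt Q ≤ s1⁻¹ * (P * s1) :=
        mul_le_mul_of_nonneg_left hub (by positivity)
  _ = P := by field_simp

lemma abstract_upper {P Q : ℝ} (hP : 0 < P) (hPQ : P^2 ≤ Q) : (Real.sqrt Q)⁻¹ * P ≤ 1 := by
  have hsP : P ≤ Real.sqrt Q := le_sqrt_self hP.le hPQ
  have h4 : 0 < Real.sqrt Q := lt_of_lt_of_le hP hsP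
  rw [inv_mul_eq_div, div_le_one h4]
  exact hsP

end Stmt11Aux

open Stmt11Aux in
theorem stmt11 :
    Tendsto blendNormal (𝓝[{v : ℝ × ℝ | 0 < v.1 ∧ 0 < v.2}] 0)
      (𝓝 ![0, 0, 1]) := by
  rw [tendsto_pi_nhds]
  intro i
  have hS : ∀ᶠ v : ℝ × ℝ in 𝓝[{v : ℝ × ℝ | 0 < v.1 ∧ 0 < v.2}] 0,
      v ∈ {v : ℝ × ℝ | 0 < v.1 ∧ 0 < v.2} := eventually_mem_nhdsWithin
  fin_cases i
  · -- coordinate 0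
    show Tendsto (fun v => blendNormal v 0) (𝓝[{v : ℝ × ℝ | 0 < v.1 ∧ 0 < v.2}] 0) (𝓝 0)
    refine squeeze_zero_norm' (a := fun v : ℝ × ℝ => (256*126)*(v.1+v.2)) ?_ ?_
    · filter_upwards [hS] with v hv
      obtain ⟨hx, hy⟩ := hv
      rw [normal_eq hx hy]
      simp only [Pi.smul_apply, smul_eq_mul, Matrix.cons_val_zero, Fin.isValue]
      rw [Real.norm_eq_abs, abs_mul, abs_inv, abs_of_nonneg (Real.sqrt_nonneg _), abs_neg,
        abs_of_nonneg (by positivity : (0:ℝ) ≤ 2*v.1^13+13*v.1^10*v.2^3+45*v.1^7*v.2^6+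
          50*v.1^4*v.2^9+16*v.1*v.2^12)]
      refine abstract0 (by norm_num) (by positivity) (bound0 hx hy) (bound2 hx hy)
        (by positivity) (by positivity) ?_
      nlinarith [sq_nonneg (-(2*v.1^13+13*v.1^10*v.2^3+45*v.1^7*v.2^6+50*v.1^4*v.2^9+
        16*v.1*v.2^12)), sq_nonneg (6*v.1^5*v.2^8+3*v.1^8*v.2^5-3*v.1^11*v.2^2)]
    · have hcont : Continuous fun v : ℝ × ℝ => (256*126:ℝ)*(v.1+v.2) := by fun_prop
      have h := (hcont.tendsto 0).mono_left (nhdsWithin_le_nhds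
        (s := {v : ℝ × ℝ | 0 < v.1 ∧ 0 < v.2}))
      simpa using h
  · -- coordinate 1
    show Tendsto (fun v => blendNormal v 1) (𝓝[{v : ℝ × ℝ | 0 < v.1 ∧ 0 < v.2}] 0) (𝓝 0)
    refine squeeze_zero_norm' (a := fun v : ℝ × ℝ => (256*12)*(v.1+v.2)) ?_ ?_
    · filter_upwards [hS] with v hv
      obtain ⟨hx, hy⟩ := hv
      rw [normal_eq hx hy]
      simp only [Pi.smul_apply, smul_eq_mul, Matrix.cons_val_one, Matrix.head_cons, Fin.isValue]
      rw [Real.norm_eq_abs, abs_mul, abs_inv, abs_of_nonneg (Real.sqrt_nonneg _)]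
      refine abstract0 (by norm_num) (abs_nonneg _) (bound1 hx hy) (bound2 hx hy)
        (by positivity) (by positivity) ?_
      nlinarith [sq_nonneg (-(2*v.1^13+13*v.1^10*v.2^3+45*v.1^7*v.2^6+50*v.1^4*v.2^9+
        16*v.1*v.2^12)), sq_nonneg (6*v.1^5*v.2^8+3*v.1^8*v.2^5-3*v.1^11*v.2^2)]
    · have hcont : Continuous fun v : ℝ × ℝ => (256*12:ℝ)*(v.1+v.2) := by fun_prop
      have h := (hcont.tendsto 0).mono_left (nhdsWithin_le_nhds
        (s := {v : ℝ × ℝ | 0 < v.1 ∧ 0 < v.2}))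
      simpa using h
  · -- coordinate 2
    show Tendsto (fun v => blendNormal v 2) (𝓝[{v : ℝ × ℝ | 0 < v.1 ∧ 0 < v.2}] 0) (𝓝 1)
    refine tendsto_of_tendsto_of_tendsto_of_le_of_le'
      (g := fun v : ℝ × ℝ => (Real.sqrt (1+1049886720*(v.1+v.2)^2))⁻¹)
      (h := fun _ => (1:ℝ)) ?_ tendsto_const_nhds ?_ ?_
    · have hc1 : Continuous fun v : ℝ × ℝ => Real.sqrt (1+1049886720*(v.1+v.2)^2) :=
        Real.continuous_sqrt.comp (by fun_prop)
      have hc : ContinuousAt (fun v : ℝ × ℝ =>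
          (Real.sqrt (1+1049886720*(v.1+v.2)^2))⁻¹) 0 := by
        apply hc1.continuousAt.inv₀
        norm_num [Prod.fst_zero, Prod.snd_zero]
      have h := hc.tendsto.mono_left (nhdsWithin_le_nhds
        (s := {v : ℝ × ℝ | 0 < v.1 ∧ 0 < v.2}))
      simpa using h
    · filter_upwards [hS] with v hv
      obtain ⟨hx, hy⟩ := hv
      rw [normal_eq hx hy]
      simp only [Pi.smul_apply, smul_eq_mul, Matrix.cons_val_two, Matrix.tail_cons,
        Matrix.head_cons, Fin.isValue]
      refine abstract_lower (by positivity) ?_ ?_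
      · exact assembleQ (by positivity) (bound0 hx hy) (bound1 hx hy) (bound2 hx hy)
          (by positivity)
      · nlinarith [sq_nonneg (-(2*v.1^13+13*v.1^10*v.2^3+45*v.1^7*v.2^6+50*v.1^4*v.2^9+
          16*v.1*v.2^12)), sq_nonneg (6*v.1^5*v.2^8+3*v.1^8*v.2^5-3*v.1^11*v.2^2)]
    · filter_upwards [hS] with v hv
      obtain ⟨hx, hy⟩ := hv
      rw [normal_eq hx hy]
      simp only [Pi.smul_apply, smul_eq_mul, Matrix.cons_val_two, Matrix.tail_cons,
        Matrix.head_cons, Fin.isValue]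
      refine abstract_upper (by positivity) ?_
      nlinarith [sq_nonneg (-(2*v.1^13+13*v.1^10*v.2^3+45*v.1^7*v.2^6+50*v.1^4*v.2^9+
        16*v.1*v.2^12)), sq_nonneg (6*v.1^5*v.2^8+3*v.1^8*v.2^5-3*v.1^11*v.2^2)]
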